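/- Let σ be an involutive automorphism of g with g = h ⊕ k, a ⊂ k abelian with σ|_a = -id, q ∈ a, Q = exp(q), and e_α a root vector for α ∈ a*. Let L = p + Σ_α l_α (e_α - σ(e_α)) with p ∈ a. Then the projection of Q L Q^{-1} onto h (along k) equals Σ_α l_α sinh(α(q)) (e_α + σ(e_α)). Consequently, if this projection is required to equal Σ_α g_α (e_α + σ(e_α)), then l_α = g_α / sinh(α(q)), yielding the Calogero-Moser Lax matrix L = p + Σ_α (g_α / sinh α(q)) (e_α - σ(e_α)). -/
import Mathlib


/-- For the symmetric-space (Calogero) situation: `σ` an involution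
with eigenspace decomposition `g = h ⊕ k`, `Q = exp q` conjugating the root
vectors by `Q e_α Q⁻¹ = e^{α(q)} e_α`, `Q σ(e_α) Q⁻¹ = e^{-α(q)} σ(e_α)`, and
`L = p + Σ_α l_α (e_α - σ(e_α))` with `p ∈ a`.  Then the projection of `Q L Q⁻¹`
onto `h` (along `k`) equals `Σ_α l_α sinh(α(q)) (e_α + σ(e_α))`; consequently,
that projection equals `Σ_α g_α (e_α + σ(e_α))` iff `l_α = g_α / sinh(α(q))`,
giving the Calogero-Moser Lax matrix. -/
theorem calogero_projection_and_lax
    {A ι : Type*} [Ring A] [Algebra ℝ A] [Fintype ι]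
    (σ : A →ₗ[ℝ] A)
    (Q : Aˣ) (p : A) (e : ι → A) (c l gc : ι → ℝ)
    (hc : ∀ i, c i ≠ 0)
    (hQp : (Q : A) * p * (↑Q⁻¹ : A) = p)
    (hQe : ∀ i, (Q : A) * e i * (↑Q⁻¹ : A) = Real.exp (c i) • e i)
    (hQσe : ∀ i, (Q : A) * σ (e i) * (↑Q⁻¹ : A) = Real.exp (-(c i)) • σ (e i))
    -- `π` is the projection onto `h` along `k`:
    (π : A →ₗ[ℝ] A)
    (hπp : π p = 0)
    (hπh : ∀ i, π (e i + σ (e i)) = e i + σ (e i))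
    (hπk : ∀ i, π (e i - σ (e i)) = 0)
    (hind : LinearIndependent ℝ (fun i => e i + σ (e i)))
    (L : A)
    (hL : L = p + ∑ i, l i • (e i - σ (e i))) :
    π ((Q : A) * L * (↑Q⁻¹ : A)) =
      ∑ i, (l i * Real.sinh (c i)) • (e i + σ (e i)) ∧
    (π ((Q : A) * L * (↑Q⁻¹ : A)) = ∑ i, gc i • (e i + σ (e i)) ↔
      ∀ i, l i = gc i / Real.sinh (c i)) := by
  have key : π ((Q : A) * L * (↑Q⁻¹ : A)) =
      ∑ i, (l i * Real.sinh (c i)) • (e i + σ (e i)) := by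
    subst hL
    have expand : (Q : A) * (p + ∑ i, l i • (e i - σ (e i))) * (↑Q⁻¹ : A) =
        p + ∑ i, l i • (Real.exp (c i) • e i - Real.exp (-(c i)) • σ (e i)) := by
      rw [mul_add, add_mul, hQp, Finset.mul_sum, Finset.sum_mul]
      congr 1
      refine Finset.sum_congr rfl fun i _ => ?_
      rw [mul_smul_comm, smul_mul_assoc]
      congr 1
      rw [mul_sub, sub_mul, hQe, hQσe]
    rw [expand, map_add, hπp, zero_add, map_sum]
    refine Finset.sum_congr rfl fun i _ => ?_
    have hdecomp : Real.exp (c i) • e i - Real.exp (-(c i)) • σ (e i) =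
        Real.sinh (c i) • (e i + σ (e i)) + Real.cosh (c i) • (e i - σ (e i)) := by
      rw [Real.sinh_eq, Real.cosh_eq]
      module
    rw [map_smul, hdecomp, map_add, map_smul, map_smul, hπh, hπk, smul_zero,
      add_zero, smul_smul]
  refine ⟨key, ?_⟩
  rw [key]
  constructor
  · intro h i
    have h0 : ∑ j, ((l j * Real.sinh (c j)) - gc j) • (e j + σ (e j)) = 0 := by
      simp only [sub_smul, Finset.sum_sub_distrib, h, sub_self]
    have := linearIndependent_iff'.mp hind Finset.univ _ h0 i (Finset.mem_univ i)
    have hs : Real.sinh (c i) ≠ 0 := Real.sinh_ne_zero.mpr (hc i)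
    field_simp
    linarith [sub_eq_zero.mp this]
  · intro h
    refine Finset.sum_congr rfl fun i _ => ?_
    have hs : Real.sinh (c i) ≠ 0 := Real.sinh_ne_zero.mpr (hc i)
    rw [h i, div_mul_cancel₀ _ hs]
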